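/- For any configuration (P, A, T) reachable by valid Lemur rule applications from an initial configuration (P, ∅, [p₀]), every element p of the trail T satisfies: p implies p₀ with respect to P. -/

import Mathlib

open scoped Classical

/-- An execution is a finite list of (state, line) pairs. -/
abbrev Execution (σ : Type*) := List (σ × ℕ)

/-- A program is a set of executions. -/
abbrev Program (σ : Type*) := Set (Execution σ)

/-- A property is a predicate on states together with a line number. -/
abbrev Property (σ : Type*) := (σ → Prop) × ℕ

/-- A property holds on an execution if its predicate is true at every
occurrence of its line. -/
def holdsOn {σ : Type*} (p : Property σ) (e : Execution σ) : Prop :=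
  ∀ pr ∈ e, pr.2 = p.2 → p.1 pr.1

/-- `p` is an invariant on `P` if it holds on every execution of `P`. -/
def isInvariant {σ : Type*} (P : Program σ) (p : Property σ) : Prop :=
  ∀ e ∈ P, holdsOn p e

/-- Truncate an execution at the first occurrence of `q`'s line where `q`'s
predicate fails. -/
noncomputable def truncAt {σ : Type*} (q : Property σ) : Execution σ → Execution σ
  | [] => []
  | a :: l => if a.2 = q.2 ∧ ¬ q.1 a.1 then [] else a :: truncAt q l

/-- The program `asm P q`: each execution of `P` truncated at the first
failure of the assumption `q`. -/
noncomputable def asmP {σ : Type*} (P : Program σ) (q : Property σ) : Program σ :=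
  (truncAt q) '' P

/-- `q` implies `p` with respect to `P`: `p` is an invariant on `asm(P, q)`. -/
noncomputable def impliesWrt {σ : Type*} (P : Program σ) (q p : Property σ) : Prop :=
  isInvariant (asmP P q) p

/-- `q` is stable for `P`: on each execution, `q`'s predicate is either true at
all occurrences of `q`'s line or false at all of them. -/
def isStable {σ : Type*} (P : Program σ) (q : Property σ) : Prop :=
  ∀ e ∈ P, (∀ pr ∈ e, pr.2 = q.2 → q.1 pr.1) ∨ (∀ pr ∈ e, pr.2 = q.2 → ¬ q.1 pr.1)

/-- The negation of a property. -/
def pneg {σ : Type*} (q : Property σ) : Property σ := (fun s => ¬ q.1 s, q.2)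


/-- Apply an optional assumption to a program. -/
noncomputable def asmOpt {σ : Type*} (P : Program σ) : Option (Property σ) → Program σ
  | none => P
  | some q => asmP P q

/-- A verifier takes a program, an optional assumption and a property, and
returns `some true` (proven), `some false` (falsified) or `none` (unknown). -/
abbrev Verifier (σ : Type*) :=
  Program σ → Option (Property σ) → Property σ → Option Bool

/-- Configurations of the Lemur calculus: a triple of program, assumption set
(empty or singleton) and trail, or a terminal `success`/`fail` state. -/
inductive Conf (σ : Type*) where
  | state (P : Program σ) (A : Option (Property σ)) (T : List (Property σ))
  | success
  | fail

/-- The transition rules of the Lemur calculus, parameterized by a verifier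
`V`, a proposal oracle `Ωp` and a repair oracle `Ωr`. -/
inductive LStep {σ : Type*} (V : Verifier σ)
    (Ωp : Program σ → Property σ → Set (Property σ))
    (Ωr : Program σ → Property σ → Property σ → Option Bool → Set (Property σ)) :
    Conf σ → Conf σ → Prop where
  | propose {P A T' p q} (h1 : V P A p = none) (h2 : q ∈ Ωp P p) :
      LStep V Ωp Ωr (.state P A (T' ++ [p])) (.state P (some q) (T' ++ [p]))
  | decide {P q T' p} (h : V P (some q) p = some true) :
      LStep V Ωp Ωr (.state P (some q) (T' ++ [p])) (.state P none (T' ++ [p, q]))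
  | backtrack {P A T' p q q'} (h1 : V P A q ≠ some true) (h2 : q' ∈ Ωp P p) :
      LStep V Ωp Ωr (.state P A (T' ++ [p, q])) (.state P (some q') (T' ++ [p]))
  | repair1 {P q T' p q'} (h1 : V P (some q) p = none) (h2 : q' ∈ Ωr P p q none) :
      LStep V Ωp Ωr (.state P (some q) (T' ++ [p])) (.state P (some q') (T' ++ [p]))
  | repair2 {P T' p q q'} (h1 : V P none q = some false)
      (h2 : q' ∈ Ωr P p q (some false)) :
      LStep V Ωp Ωr (.state P none (T' ++ [p, q])) (.state P (some q') (T' ++ [p]))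
  | success1 {P T' p} (h : V P none p = some true) :
      LStep V Ωp Ωr (.state P none (T' ++ [p])) .success
  | success2 {P T' p q} (hs : isStable P q) (h : V P (some (pneg q)) p = some true) :
      LStep V Ωp Ωr (.state P none (T' ++ [p, q])) .success
  | fail {P A p} (h : V P A p = some false) :
      LStep V Ωp Ωr (.state P A [p]) .fail

/-- A configuration is reachable from another by a sequence of valid rule
applications. -/
def Reaches {σ : Type*} (V : Verifier σ)
    (Ωp : Program σ → Property σ → Set (Property σ))
    (Ωr : Program σ → Property σ → Property σ → Option Bool → Set (Property σ)) :
    Conf σ → Conf σ → Prop :=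
  Relation.ReflTransGen (LStep V Ωp Ωr)

lemma truncAt_prefix {σ : Type*} (q : Property σ) (e : Execution σ) :
    truncAt q e <+: e := by
  induction e with
  | nil => simp [truncAt]
  | cons a l ih =>
    rw [truncAt]
    split
    · exact List.nil_prefix
    · exact List.cons_prefix_cons.mpr ⟨rfl, ih⟩

lemma prefix_truncAt {σ : Type*} {q : Property σ} {l e : Execution σ}
    (hl : holdsOn q l) (hp : l <+: e) : l <+: truncAt q e := by
  induction l generalizing e with
  | nil => exact List.nil_prefix
  | cons a l ih =>
    obtain ⟨e', rfl, hp'⟩ : ∃ e', e = a :: e' ∧ l <+: e' := by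
      cases e with
      | nil => simpa using hp
      | cons b e' =>
        obtain ⟨h1, h2⟩ := List.cons_prefix_cons.mp hp
        exact ⟨e', by rw [h1], h2⟩
    rw [truncAt, if_neg]
    · exact List.cons_prefix_cons.mpr ⟨rfl,
        ih (fun pr hpr h => hl pr (List.mem_cons_of_mem _ hpr) h) hp'⟩
    · rintro ⟨h1, h2⟩
      exact h2 (hl a (List.mem_cons_self (a := a) (l := l)) h1)

lemma impliesWrt_refl {σ : Type*} (P : Program σ) (p : Property σ) :
    impliesWrt P p p := by
  rintro e' ⟨e, he, rfl⟩
  clear he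
  induction e with
  | nil => intro pr hpr; simp [truncAt] at hpr
  | cons a l ih =>
    rw [truncAt]
    split
    · intro pr hpr; simp at hpr
    · rename_i hcond
      intro pr hpr hline
      rcases List.mem_cons.mp hpr with h | h
      · subst h
        by_contra hq
        exact hcond ⟨hline, hq⟩
      · exact ih pr h hline

lemma impliesWrt_trans {σ : Type*} {P : Program σ} {p q r : Property σ}
    (h1 : impliesWrt P q p) (h2 : impliesWrt P r q) : impliesWrt P r p := by
  rintro e' ⟨e, he, rfl⟩
  have hq : holdsOn q (truncAt r e) := h2 _ ⟨e, he, rfl⟩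
  have hpre : truncAt r e <+: truncAt q e := prefix_truncAt hq (truncAt_prefix r e)
  have hp : holdsOn p (truncAt q e) := h1 _ ⟨e, he, rfl⟩
  exact fun pr hpr hline => hp pr (hpre.subset hpr) hline

/-- In any configuration `(P, A, T)` reachable by valid Lemur rule
applications from `(P, ∅, [p₀])`, assuming the verifier is sound for positive
answers, every element `p` of the trail implies `p₀` with respect to `P`. -/
theorem stmt_8 {σ : Type*} (V : Verifier σ)
    (Ωp : Program σ → Property σ → Set (Property σ))
    (Ωr : Program σ → Property σ → Property σ → Option Bool → Set (Property σ))
    (hV : ∀ (P : Program σ) (A : Option (Property σ)) (p : Property σ),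
      V P A p = some true → isInvariant (asmOpt P A) p)
    (P : Program σ) (p₀ : Property σ)
    (A : Option (Property σ)) (T : List (Property σ))
    (h : Reaches V Ωp Ωr (.state P none [p₀]) (.state P A T)) :
    ∀ p ∈ T, impliesWrt P p p₀ := by
  have key : ∀ C, Reaches V Ωp Ωr (.state P none [p₀]) C →
      ∀ P' A' T', C = .state P' A' T' →
        P' = P ∧ ∀ x ∈ T', impliesWrt P x p₀ := by
    intro C hC
    induction hC with
    | refl =>
      intro P' A' T' hEq
      injection hEq with h1 h2 h3
      subst h1; subst h3
      exact ⟨rfl, by simp_all [impliesWrt_refl P p₀]⟩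
    | tail hr step ih =>
      intro P' A' T' hEq
      cases step with
      | propose h1 h2 =>
        injection hEq with e1 e2 e3
        subst e1; subst e3
        exact ih _ _ _ rfl
      | @decide P₂ q T₂ p h =>
        injection hEq with e1 e2 e3
        subst e1; subst e3
        obtain ⟨hP, hT⟩ := ih _ _ _ rfl
        refine ⟨hP, ?_⟩
        have hqp : impliesWrt P₂ q p := hV P₂ (some q) p h
        rw [hP] at hqp
        have hp : impliesWrt P p p₀ := hT p (by simp)
        intro x hx
        rcases List.mem_append.mp hx with h1 | h1
        · exact hT x (List.mem_append.mpr (Or.inl h1))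
        · simp at h1
          rcases h1 with rfl | rfl
          · exact hp
          · exact impliesWrt_trans hp hqp
      | backtrack h1 h2 =>
        injection hEq with e1 e2 e3
        subst e1; subst e3
        obtain ⟨hP, hT⟩ := ih _ _ _ rfl
        refine ⟨hP, fun x hx => hT x ?_⟩
        rcases List.mem_append.mp hx with h' | h'
        · exact List.mem_append.mpr (Or.inl h')
        · simp at h'; subst h'
          exact List.mem_append.mpr (Or.inr (by simp))
      | repair1 h1 h2 =>
        injection hEq with e1 e2 e3
        subst e1; subst e3
        exact ih _ _ _ rfl
      | repair2 h1 h2 =>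
        injection hEq with e1 e2 e3
        subst e1; subst e3
        obtain ⟨hP, hT⟩ := ih _ _ _ rfl
        refine ⟨hP, fun x hx => hT x ?_⟩
        rcases List.mem_append.mp hx with h' | h'
        · exact List.mem_append.mpr (Or.inl h')
        · simp at h'; subst h'
          exact List.mem_append.mpr (Or.inr (by simp))
      | success1 h => exact absurd hEq (by simp)
      | success2 hs h => exact absurd hEq (by simp)
      | fail h => exact absurd hEq (by simp)
  exact (key _ h _ _ _ rfl).2
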